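/- Strong duality in recoverable form: with Q ≻ 0 and λ* ≥ 0 a minimizer of the dual objective λ ↦ λᵀQ̃λ + c̃ᵀλ + d̃ over {λ ≥ 0}, the point x* = −(1/2)Q⁻¹(c + Aᵀλ*) is a global minimizer of x ↦ xᵀQx + cᵀx + d over {x : Ax ≤ b}, and the optimal values satisfy (x*)ᵀQx* + cᵀx* + d = −((λ*)ᵀQ̃λ* + c̃ᵀλ* + d̃). -/

import Mathlib

open Matrix

/-- Symmetric matrices give symmetric quadratic forms. -/
lemma sym_dot {n : ℕ} (M : Matrix (Fin n) (Fin n) ℝ) (hM : Mᵀ = M) (u v : Fin n → ℝ) :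
    u ⬝ᵥ (M *ᵥ v) = v ⬝ᵥ (M *ᵥ u) := by
  rw [dotProduct_mulVec, ← mulVec_transpose, hM, dotProduct_comm]

lemma dot_transfer {n m : ℕ} (A : Matrix (Fin m) (Fin n) ℝ) (u : Fin m → ℝ) (v : Fin n → ℝ) :
    u ⬝ᵥ (A *ᵥ v) = (Aᵀ *ᵥ u) ⬝ᵥ v := by
  rw [dotProduct_mulVec, mulVec_transpose]

/-- Strong duality: the primal solution recovered from a dual optimal solution is a
global primal minimizer and the optimal values coincide. -/
theorem stmt_12 {n m : ℕ} (Q : Matrix (Fin n) (Fin n) ℝ) (hQ : Q.PosDef)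
    (A : Matrix (Fin m) (Fin n) ℝ) (c : Fin n → ℝ) (b : Fin m → ℝ) (d : ℝ)
    (Qt : Matrix (Fin m) (Fin m) ℝ) (hQt : Qt = (1/4 : ℝ) • (A * Q⁻¹ * Aᵀ))
    (ct : Fin m → ℝ) (hct : ct = (1/2 : ℝ) • (A *ᵥ (Q⁻¹ *ᵥ c)) + b)
    (dt : ℝ) (hdt : dt = (1/4 : ℝ) * (c ⬝ᵥ (Q⁻¹ *ᵥ c)) - d)
    (lams : Fin m → ℝ) (hlams : ∀ i, 0 ≤ lams i)
    (hmin : ∀ lam : Fin m → ℝ, (∀ i, 0 ≤ lam i) →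
      lams ⬝ᵥ (Qt *ᵥ lams) + ct ⬝ᵥ lams + dt ≤ lam ⬝ᵥ (Qt *ᵥ lam) + ct ⬝ᵥ lam + dt)
    (xs : Fin n → ℝ) (hxs : xs = (-(1/2 : ℝ)) • (Q⁻¹ *ᵥ (c + Aᵀ *ᵥ lams))) :
    (∀ i, (A *ᵥ xs) i ≤ b i) ∧
      (∀ x : Fin n → ℝ, (∀ i, (A *ᵥ x) i ≤ b i) →
        xs ⬝ᵥ (Q *ᵥ xs) + c ⬝ᵥ xs + d ≤ x ⬝ᵥ (Q *ᵥ x) + c ⬝ᵥ x + d) ∧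
      xs ⬝ᵥ (Q *ᵥ xs) + c ⬝ᵥ xs + d = -(lams ⬝ᵥ (Qt *ᵥ lams) + ct ⬝ᵥ lams + dt) := by
  have hdet : IsUnit Q.det := isUnit_iff_ne_zero.mpr (ne_of_gt hQ.det_pos)
  have hQQi : Q * Q⁻¹ = 1 := Q.mul_nonsing_inv hdet
  have hQsym : Qᵀ = Q := by
    rw [← conjTranspose_eq_transpose_of_trivial]; exact hQ.isHermitian.eq
  have hQisym : (Q⁻¹)ᵀ = Q⁻¹ := by rw [transpose_nonsing_inv, hQsym]
  have hQtsym : Qtᵀ = Qt := by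
    rw [hQt, transpose_smul, transpose_mul, transpose_mul, transpose_transpose, hQisym,
      Matrix.mul_assoc]
  -- positive semidefiniteness helpers
  have hQpsd : ∀ v : Fin n → ℝ, 0 ≤ v ⬝ᵥ (Q *ᵥ v) := fun v => by
    simpa using hQ.posSemidef.re_dotProduct_nonneg v
  have hQipsd : ∀ v : Fin n → ℝ, 0 ≤ v ⬝ᵥ (Q⁻¹ *ᵥ v) := fun v => by
    simpa using hQ.inv.posSemidef.re_dotProduct_nonneg v
  have hQtpsd : ∀ v : Fin m → ℝ, 0 ≤ v ⬝ᵥ (Qt *ᵥ v) := fun v => by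
    rw [hQt, smul_mulVec, dotProduct_smul, ← mulVec_mulVec, ← mulVec_mulVec,
      dot_transfer]
    have := hQipsd (Aᵀ *ᵥ v)
    positivity
  -- gradient identity: 2 (Qt lams) + ct = b - A xs  (pointwise)
  have hAxsEq : A *ᵥ xs = (-(1/2 : ℝ)) • (A *ᵥ (Q⁻¹ *ᵥ c) + A *ᵥ (Q⁻¹ *ᵥ (Aᵀ *ᵥ lams))) := by
    rw [hxs, mulVec_smul, mulVec_add, mulVec_add]
  have hQtlam : Qt *ᵥ lams = (1/4 : ℝ) • (A *ᵥ (Q⁻¹ *ᵥ (Aᵀ *ᵥ lams))) := by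
    rw [hQt, smul_mulVec, ← mulVec_mulVec, ← mulVec_mulVec]
  have hgrad : ∀ i, 2 * (Qt *ᵥ lams) i + ct i = b i - (A *ᵥ xs) i := by
    intro i
    rw [hAxsEq, hQtlam, hct]
    simp only [Pi.smul_apply, Pi.add_apply, smul_eq_mul]
    ring
  -- quadratic expansion of the dual objective along a coordinate direction
  have hexp : ∀ (i : Fin m) (t : ℝ), -lams i ≤ t →
      0 ≤ t * (b i - (A *ᵥ xs) i) + t ^ 2 * Qt i i := by
    intro i t ht
    set u : Fin m → ℝ := Pi.single i (1 : ℝ) with hu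
    set w : Fin m → ℝ := lams + t • u with hw
    have hwpos : ∀ j, 0 ≤ w j := by
      intro j
      rcases eq_or_ne j i with rfl | hj
      · simp [hw, hu]; linarith
      · simp [hw, hu, Pi.single_apply, hj, hlams j]
    have hQtu : Qt *ᵥ u = fun j => Qt j i := by
      rw [hu, mulVec_single]; simp; rfl
    have hsymE : ∀ j, Qt j i = Qt i j := fun j => (congrFun (congrFun hQtsym j) i).symm
    have h1 : lams ⬝ᵥ (fun j => Qt j i) = (Qt *ᵥ lams) i := by
      simp only [dotProduct, mulVec]
      exact Finset.sum_congr rfl fun j _ => by rw [hsymE j, mul_comm]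
    have hdual : w ⬝ᵥ (Qt *ᵥ w) + ct ⬝ᵥ w + dt =
        (lams ⬝ᵥ (Qt *ᵥ lams) + ct ⬝ᵥ lams + dt)
          + t * (2 * (Qt *ᵥ lams) i + ct i) + t ^ 2 * Qt i i := by
      rw [hw, mulVec_add, mulVec_smul, hQtu, dotProduct_add, dotProduct_add,
        add_dotProduct, add_dotProduct, dotProduct_smul, smul_dotProduct,
        smul_dotProduct, dotProduct_smul, hu]
      simp only [dotProduct_smul, single_dotProduct, dotProduct_single, h1,
        smul_eq_mul, one_mul, mul_one]
      ring
    have hmm := hmin w hwpos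
    rw [hdual, hgrad i] at hmm
    linarith
  have hQtdiag : ∀ i, 0 ≤ Qt i i := by
    intro i
    have := hQtpsd (Pi.single i 1)
    simpa [mulVec_single, single_dotProduct] using this
  -- feasibility
  have hfeas : ∀ i, (A *ᵥ xs) i ≤ b i := by
    intro i
    by_contra h
    push_neg at h
    set s : ℝ := b i - (A *ᵥ xs) i with hs
    have hsneg : s < 0 := by rw [hs]; linarith
    have hq : 0 ≤ Qt i i := hQtdiag i
    have hqpos : (0:ℝ) < Qt i i + 1 := by linarith
    have ht : (0:ℝ) < -s / (Qt i i + 1) := div_pos (by linarith) hqpos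
    have hh := hexp i (-s / (Qt i i + 1)) (by nlinarith [hlams i])
    have hff : -s / (Qt i i + 1) * (Qt i i + 1) = -s := div_mul_cancel₀ _ hqpos.ne'
    nlinarith [mul_pos ht ht, sq_nonneg (-s / (Qt i i + 1))]
  -- complementary slackness
  have hcs : ∀ i, lams i * (b i - (A *ᵥ xs) i) = 0 := by
    intro i
    rcases (hlams i).eq_or_lt with h0 | h0
    · rw [← h0]; ring
    set s : ℝ := b i - (A *ᵥ xs) i with hs
    have hsnn : 0 ≤ s := by rw [hs]; linarith [hfeas i]
    rcases hsnn.eq_or_lt with h1 | h1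
    · rw [← h1]; ring
    exfalso
    have hq : 0 ≤ Qt i i := hQtdiag i
    have h2q : (0:ℝ) < 2 * (Qt i i + 1) := by positivity
    set e : ℝ := min (lams i) (s / (2 * (Qt i i + 1))) with he
    have hepos : 0 < e := lt_min h0 (by positivity)
    have he1 : e ≤ lams i := min_le_left _ _
    have he2 : e ≤ s / (2 * (Qt i i + 1)) := min_le_right _ _
    have hh := hexp i (-e) (by linarith)
    have he3 : e * (2 * (Qt i i + 1)) ≤ s := by
      have h4 := mul_le_mul_of_nonneg_right he2 h2q.le
      rwa [div_mul_cancel₀ _ h2q.ne'] at h4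
    nlinarith [mul_pos hepos h1, mul_pos hepos hepos]
  -- stationarity: Q xs = -(1/2)(c + Aᵀ lams)
  have hstat : Q *ᵥ xs = (-(1/2 : ℝ)) • (c + Aᵀ *ᵥ lams) := by
    rw [hxs, mulVec_smul, mulVec_mulVec, hQQi, one_mulVec]
  have hQxs : ∀ y : Fin n → ℝ,
      y ⬝ᵥ (Q *ᵥ xs) = -(1/2 : ℝ) * (c ⬝ᵥ y + lams ⬝ᵥ (A *ᵥ y)) := by
    intro y
    rw [hstat, dotProduct_smul, dotProduct_add, dotProduct_comm y (Aᵀ *ᵥ lams),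
      ← dot_transfer, dotProduct_comm y c, smul_eq_mul]
  -- complementary slackness in aggregated form
  have hcs' : lams ⬝ᵥ (A *ᵥ xs) = lams ⬝ᵥ b := by
    have hsum : lams ⬝ᵥ b - lams ⬝ᵥ (A *ᵥ xs) = ∑ i, lams i * (b i - (A *ᵥ xs) i) := by
      simp [dotProduct, ← Finset.sum_sub_distrib, mul_sub]
    rw [Finset.sum_congr rfl (fun i _ => hcs i)] at hsum
    simp only [Finset.sum_const_zero] at hsum
    linarith
  refine ⟨hfeas, ?_, ?_⟩
  · -- optimality
    intro x hx
    have hlax : lams ⬝ᵥ (A *ᵥ x) ≤ lams ⬝ᵥ b := by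
      apply Finset.sum_le_sum
      intro i _
      exact mul_le_mul_of_nonneg_left (hx i) (hlams i)
    have hpsd : 0 ≤ (x - xs) ⬝ᵥ (Q *ᵥ (x - xs)) := hQpsd _
    have hexp2 : (x - xs) ⬝ᵥ (Q *ᵥ (x - xs)) =
        x ⬝ᵥ (Q *ᵥ x) - 2 * (x ⬝ᵥ (Q *ᵥ xs)) + xs ⬝ᵥ (Q *ᵥ xs) := by
      rw [mulVec_sub, dotProduct_sub, sub_dotProduct, sub_dotProduct,
        sym_dot Q hQsym xs x]
      ring
    have h2 := hQxs x
    have h3 := hQxs xs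
    rw [hcs'] at h3
    linarith
  · -- value equality
    set α := c ⬝ᵥ (Q⁻¹ *ᵥ c) with hα
    set β := lams ⬝ᵥ (A *ᵥ (Q⁻¹ *ᵥ c)) with hβ
    set γ := lams ⬝ᵥ (A *ᵥ (Q⁻¹ *ᵥ (Aᵀ *ᵥ lams))) with hγ
    set δ := lams ⬝ᵥ b with hδ
    have hg1 : lams ⬝ᵥ (Qt *ᵥ lams) = (1/4 : ℝ) * γ := by
      rw [hQtlam, dotProduct_smul, smul_eq_mul, ← hγ]
    have hg2 : ct ⬝ᵥ lams = (1/2 : ℝ) * β + δ := by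
      rw [hct, add_dotProduct, smul_dotProduct, dotProduct_comm _ lams,
        dotProduct_comm b lams, smul_eq_mul, ← hβ, ← hδ]
    have hswap : c ⬝ᵥ (Q⁻¹ *ᵥ (Aᵀ *ᵥ lams)) = β := by
      rw [sym_dot Q⁻¹ hQisym c, ← dot_transfer, ← hβ]
    have hcxs : c ⬝ᵥ xs = -(1/2 : ℝ) * (α + β) := by
      rw [hxs, dotProduct_smul, mulVec_add, dotProduct_add, hswap, smul_eq_mul, ← hα]
    have hAxs2 : lams ⬝ᵥ (A *ᵥ xs) = -(1/2 : ℝ) * (β + γ) := by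
      rw [hxs, mulVec_smul, mulVec_add, mulVec_add, dotProduct_smul, dotProduct_add,
        smul_eq_mul, ← hβ, ← hγ]
    have h3 := hQxs xs
    rw [hcs'] at h3
    have hδeq : δ = -(1/2 : ℝ) * (β + γ) := by rw [← hcs', hAxs2]
    rw [hg1, hg2, hdt, h3, hcxs]
    linarith
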